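/- Let γ, Σ be constants with 0 < Σ < 1 and γ + (2 − γ)Σ² ≠ 0, and define H(t) = 2/(3(γ + (2 − γ)Σ²) t) for t > 0. Then H solves the Raychaudhuri equation Ḣ = −(3/2) H² ((1 − Σ²)γ + 2Σ²), and ρ(t) = 3H(t)²(1 − Σ²) satisfies ρ(t)/ρ(t₀) = (t₀/t)². -/

import Mathlib

open Real

/-- The extended Kasner Hubble rate `H(t) = 2/(3(γ+(2−γ)Σ²)t)` solves the
Raychaudhuri equation `Ḣ = −(3/2)H²((1−Σ²)γ + 2Σ²)` on `(0, ∞)`, and the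
density `ρ = 3H²(1−Σ²)` satisfies `ρ(t)/ρ(t₀) = (t₀/t)²`. -/
theorem extended_kasner_hubble (γ S : ℝ) (hS : S ∈ Set.Ioo (0 : ℝ) 1)
    (hk : γ + (2 - γ) * S ^ 2 ≠ 0) :
    (∀ t ∈ Set.Ioi (0 : ℝ),
      HasDerivAt (fun t => 2 / (3 * (γ + (2 - γ) * S ^ 2) * t))
        (-(3 / 2) * (2 / (3 * (γ + (2 - γ) * S ^ 2) * t)) ^ 2
          * ((1 - S ^ 2) * γ + 2 * S ^ 2)) t) ∧
    (∀ t ∈ Set.Ioi (0 : ℝ), ∀ t₀ ∈ Set.Ioi (0 : ℝ),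
      (3 * (2 / (3 * (γ + (2 - γ) * S ^ 2) * t)) ^ 2 * (1 - S ^ 2)) /
      (3 * (2 / (3 * (γ + (2 - γ) * S ^ 2) * t₀)) ^ 2 * (1 - S ^ 2)) = (t₀ / t) ^ 2) := by
  obtain ⟨hS0, hS1⟩ := hS
  have hS2 : 1 - S ^ 2 ≠ 0 := by nlinarith
  constructor
  · intro t ht
    have ht0 : t ≠ 0 := ne_of_gt ht
    have h := ((hasDerivAt_inv ht0).const_mul (2 / (3 * (γ + (2 - γ) * S ^ 2))))
    convert h using 1
    · rfl
    · rfl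
    · funext x
      rw [← div_div, div_eq_mul_inv]
    · field_simp
      ring
  · intro t ht t₀ ht₀
    have ht0 : t ≠ 0 := ne_of_gt ht
    have ht₀0 : t₀ ≠ 0 := ne_of_gt ht₀
    field_simp
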